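/- Let G be a regular caterpillar with an odd number s = 2k+1 of spine vertices, each spine vertex having exactly Δ ≥ 1 legs, so that G has n = (2k+1)(Δ+1) vertices. Then there exists a labeling of G with differential value at least ⌈(n − Δ)/2⌉; consequently the differential chromatic number of G equals ⌈(n − Δ)/2⌉. -/
import Mathlib


/-- A labeling of the vertices of a finite graph on `n` vertices: a one-to-one
assignment of the numbers `1, …, n` to the vertices. -/
def IsLabeling {V : Type*} [Fintype V] (c : V → ℕ) : Prop :=
  Function.Injective c ∧ ∀ v, c v ∈ Finset.Icc 1 (Fintype.card V)

/-- The differential value of the labeling `c` is at least `d`: every edge has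
label difference at least `d`. -/
def DiffValAtLeast {V : Type*} (G : SimpleGraph V) (c : V → ℕ) (d : ℕ) : Prop :=
  ∀ u v, G.Adj u v → d ≤ Nat.dist (c u) (c v)

/-- The differential chromatic number: the maximum, over all labelings, of the
minimum label difference over the edges. -/
noncomputable def diffChromNum {V : Type*} [Fintype V] (G : SimpleGraph V) : ℕ :=
  sSup {d : ℕ | ∃ c : V → ℕ, IsLabeling c ∧ DiffValAtLeast G c d}

/-- The regular caterpillar with spine vertices `(i, 0)` for `i : Fin s` forming a
path, each spine vertex `(i, 0)` adjacent to its `Δ` legs `(i, j)`, `j ≠ 0`. -/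
def regularCaterpillar (s Δ : ℕ) : SimpleGraph (Fin s × Fin (Δ + 1)) :=
  SimpleGraph.fromRel (fun a b =>
    (a.2 = 0 ∧ b.2 = 0 ∧ (a.1 : ℕ) + 1 = (b.1 : ℕ)) ∨
    (a.1 = b.1 ∧ a.2 = 0 ∧ b.2 ≠ 0))

/-- The explicit optimal labeling of the regular caterpillar. -/
private def lab (k Δ i j : ℕ) : ℕ :=
  if j = 0 then
    (if i % 2 = 0 then i / 2 + 1 else 2*k*Δ + k + Δ + 2 + i / 2)
  else
    (if i % 2 = 0 then k*Δ + k + 1 + (i / 2)*Δ + j else k + 1 + (i / 2)*Δ + j)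

private lemma dist_ge_left {a b d : ℕ} (h : a + d ≤ b) : d ≤ Nat.dist a b := by
  simp [Nat.dist]; omega

private lemma dist_ge_right {a b d : ℕ} (h : b + d ≤ a) : d ≤ Nat.dist a b := by
  simp [Nat.dist]; omega

private lemma mulkey {Δ t j t' j' : ℕ} (h1 : 1 ≤ j) (h2 : j ≤ Δ)
    (h3 : 1 ≤ j') (h4 : j' ≤ Δ)
    (h : t*Δ + j = t'*Δ + j') : t = t' ∧ j = j' := by
  rcases lt_trichotomy t t' with hl | hee | hl
  · exfalso
    have h5 : (t+1)*Δ ≤ t'*Δ := mul_le_mul_left hl Δ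
    have e : (t+1)*Δ = t*Δ + Δ := by ring
    linarith
  · subst hee
    exact ⟨rfl, by linarith⟩
  · exfalso
    have h5 : (t'+1)*Δ ≤ t*Δ := mul_le_mul_left hl Δ
    have e : (t'+1)*Δ = t'*Δ + Δ := by ring
    linarith

set_option maxHeartbeats 1000000 in
private lemma lab_inj (k Δ : ℕ) (hΔ : 1 ≤ Δ) {i j i' j' : ℕ}
    (hi : i ≤ 2*k) (hj : j ≤ Δ) (hi' : i' ≤ 2*k) (hj' : j' ≤ Δ)
    (h : lab k Δ i j = lab k Δ i' j') : i = i' ∧ j = j' := by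
  have he : i = 2*(i/2) + i%2 := by omega
  have he' : i' = 2*(i'/2) + i'%2 := by omega
  have ht : i/2 ≤ k := by omega
  have ht' : i'/2 ≤ k := by omega
  have hp1 : (i/2)*Δ ≤ k*Δ := mul_le_mul_left ht Δ
  have hp2 : (i'/2)*Δ ≤ k*Δ := mul_le_mul_left ht' Δ
  have fB : ∀ t : ℕ, t + 1 ≤ k → t*Δ + Δ ≤ k*Δ := by
    intro t htk
    calc t*Δ + Δ = (t+1)*Δ := by ring
      _ ≤ k*Δ := mul_le_mul_left htk Δ
  have hz0 := Nat.zero_le (k*Δ)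
  have hz1 := Nat.zero_le ((i/2)*Δ)
  have hz2 := Nat.zero_le ((i'/2)*Δ)
  have hz3 := Nat.zero_le (i/2)
  have hz4 := Nat.zero_le (i'/2)
  have hz5 := Nat.zero_le j
  have hz6 := Nat.zero_le j'
  have hzk := Nat.zero_le k
  by_cases cj : j = 0 <;> by_cases cj' : j' = 0 <;>
    rcases Nat.mod_two_eq_zero_or_one i with ci | ci <;>
    rcases Nat.mod_two_eq_zero_or_one i' with ci' | ci' <;>
    simp [lab, ci, ci', cj, cj'] at h <;>
    first
    | (constructor <;> omega)
    | (have e : i/2 = i'/2 := by linarith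
       constructor <;> omega)
    | (have hj1 : 1 ≤ j := by omega
       have hj'1 : 1 ≤ j' := by omega
       have h' : (i/2)*Δ + j = (i'/2)*Δ + j' := by linarith
       obtain ⟨e1, e2⟩ := mulkey hj1 hj hj'1 hj' h'
       constructor <;> omega)
    | (exfalso
       first
       | linarith
       | linarith [(by omega : 1 ≤ j)]
       | linarith [(by omega : 1 ≤ j')]
       | linarith [(by omega : 1 ≤ j), (by omega : 1 ≤ j')]
       | linarith [fB (i/2) (by omega)]
       | linarith [fB (i'/2) (by omega)]
       | linarith [fB (i/2) (by omega), (by omega : 1 ≤ j')]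
       | linarith [fB (i'/2) (by omega), (by omega : 1 ≤ j)]
       | linarith [fB (i/2) (by omega), fB (i'/2) (by omega),
           (by omega : 1 ≤ j), (by omega : 1 ≤ j')])

private lemma lab_mem (k Δ : ℕ) (hΔ : 1 ≤ Δ) (i j : ℕ) (hi : i ≤ 2*k) (hj : j ≤ Δ) :
    1 ≤ lab k Δ i j ∧ lab k Δ i j ≤ (2*k+1)*(Δ+1) := by
  have hn : (2*k+1)*(Δ+1) = 2*k*Δ + 2*k + Δ + 1 := by ring
  have ht : i/2 ≤ k := by omega
  have hp : (i/2)*Δ ≤ k*Δ := mul_le_mul_left ht Δ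
  have hz0 := Nat.zero_le (k*Δ)
  have hz1 := Nat.zero_le ((i/2)*Δ)
  have hz2 := Nat.zero_le (i/2)
  have hz3 := Nat.zero_le j
  have hzk := Nat.zero_le k
  rcases Nat.mod_two_eq_zero_or_one i with hpar | hpar
  · by_cases hj0 : j = 0
    · rw [show lab k Δ i j = i/2 + 1 from by simp [lab, hpar, hj0]]
      exact ⟨by linarith, by linarith⟩
    · rw [show lab k Δ i j = k*Δ + k + 1 + (i/2)*Δ + j from by simp [lab, hpar, hj0]]
      exact ⟨by linarith, by linarith⟩
  · have hodd : i/2 + 1 ≤ k := by omega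
    by_cases hj0 : j = 0
    · rw [show lab k Δ i j = 2*k*Δ + k + Δ + 2 + i/2 from by simp [lab, hpar, hj0]]
      exact ⟨by linarith, by linarith⟩
    · rw [show lab k Δ i j = k + 1 + (i/2)*Δ + j from by simp [lab, hpar, hj0]]
      exact ⟨by linarith, by linarith⟩

private lemma lower (k Δ : ℕ) (hΔ : 1 ≤ Δ) :
    ∃ c : Fin (2*k+1) × Fin (Δ+1) → ℕ, IsLabeling c ∧
      DiffValAtLeast (regularCaterpillar (2*k+1) Δ) c (k*(Δ+1)+1) := by
  refine ⟨fun p => lab k Δ p.1 p.2, ⟨?_, ?_⟩, ?_⟩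
  · intro p q hpq
    have hb1 : (p.1 : ℕ) ≤ 2*k := by have := p.1.isLt; omega
    have hb2 : (p.2 : ℕ) ≤ Δ := by have := p.2.isLt; omega
    have hb3 : (q.1 : ℕ) ≤ 2*k := by have := q.1.isLt; omega
    have hb4 : (q.2 : ℕ) ≤ Δ := by have := q.2.isLt; omega
    obtain ⟨e1, e2⟩ := lab_inj k Δ hΔ hb1 hb2 hb3 hb4 hpq
    exact Prod.ext (Fin.ext e1) (Fin.ext e2)
  · intro v
    have hcard : Fintype.card (Fin (2*k+1) × Fin (Δ+1)) = (2*k+1)*(Δ+1) := by simp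
    rw [hcard, Finset.mem_Icc]
    exact lab_mem k Δ hΔ v.1 v.2 (by have := v.1.isLt; omega) (by have := v.2.isLt; omega)
  · intro u v huv
    rw [regularCaterpillar, SimpleGraph.fromRel_adj] at huv
    obtain ⟨hne, hr⟩ := huv
    have main : ∀ a b : Fin (2*k+1) × Fin (Δ+1),
        ((a.2 = 0 ∧ b.2 = 0 ∧ (a.1:ℕ)+1 = (b.1:ℕ)) ∨ (a.1 = b.1 ∧ a.2 = 0 ∧ b.2 ≠ 0)) →
        k*(Δ+1)+1 ≤ Nat.dist (lab k Δ a.1 a.2) (lab k Δ b.1 b.2) := by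
      have hkk : k*(Δ+1) = k*Δ + k := by ring
      rintro a b (⟨ha, hb, hab⟩ | ⟨hab, ha, hb⟩)
      · have ha' : (a.2 : ℕ) = 0 := by rw [ha]; rfl
        have hb' : (b.2 : ℕ) = 0 := by rw [hb]; rfl
        rw [ha', hb', ← hab]
        have hia : (a.1:ℕ) ≤ 2*k := by have := a.1.isLt; omega
        rcases Nat.mod_two_eq_zero_or_one (a.1:ℕ) with cpar | cpar
        · have h1 : ((a.1:ℕ)+1) % 2 = 1 := by omega
          have h2 : ((a.1:ℕ)+1) / 2 = (a.1:ℕ)/2 := by omega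
          rw [show lab k Δ (a.1:ℕ) 0 = (a.1:ℕ)/2 + 1 from by simp [lab, cpar],
              show lab k Δ ((a.1:ℕ)+1) 0 = 2*k*Δ + k + Δ + 2 + (a.1:ℕ)/2 from by
                simp [lab, h1, h2]]
          apply dist_ge_left
          linarith [Nat.zero_le (k*Δ)]
        · have h1 : ((a.1:ℕ)+1) % 2 = 0 := by omega
          have h2 : ((a.1:ℕ)+1) / 2 = (a.1:ℕ)/2 + 1 := by omega
          rw [show lab k Δ (a.1:ℕ) 0 = 2*k*Δ + k + Δ + 2 + (a.1:ℕ)/2 from by simp [lab, cpar],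
              show lab k Δ ((a.1:ℕ)+1) 0 = (a.1:ℕ)/2 + 1 + 1 from by simp [lab, h1, h2]]
          apply dist_ge_right
          linarith [Nat.zero_le (k*Δ)]
      · have ha' : (a.2 : ℕ) = 0 := by rw [ha]; rfl
        have hb1 : 1 ≤ (b.2:ℕ) := by
          rcases Nat.eq_zero_or_pos (b.2:ℕ) with hz | hz
          · exact absurd (Fin.ext hz : b.2 = 0) hb
          · exact hz
        have hj : (b.2:ℕ) ≤ Δ := by have := b.2.isLt; omega
        rw [ha', ← hab]
        have hia : (a.1:ℕ) ≤ 2*k := by have := a.1.isLt; omega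
        have hbz : ¬ ((b.2:ℕ) = 0) := by omega
        rcases Nat.mod_two_eq_zero_or_one (a.1:ℕ) with cpar | cpar
        · rw [show lab k Δ (a.1:ℕ) 0 = (a.1:ℕ)/2 + 1 from by simp [lab, cpar],
              show lab k Δ (a.1:ℕ) (b.2:ℕ) = k*Δ + k + 1 + ((a.1:ℕ)/2)*Δ + (b.2:ℕ) from by
                simp [lab, cpar, hbz]]
          apply dist_ge_left
          have hmm : (a.1:ℕ)/2 ≤ ((a.1:ℕ)/2)*Δ := by
            calc (a.1:ℕ)/2 = ((a.1:ℕ)/2)*1 := by ring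
              _ ≤ ((a.1:ℕ)/2)*Δ := mul_le_mul_right hΔ _
          linarith
        · rw [show lab k Δ (a.1:ℕ) 0 = 2*k*Δ + k + Δ + 2 + (a.1:ℕ)/2 from by simp [lab, cpar],
              show lab k Δ (a.1:ℕ) (b.2:ℕ) = k + 1 + ((a.1:ℕ)/2)*Δ + (b.2:ℕ) from by
                simp [lab, cpar, hbz]]
          apply dist_ge_right
          have htk : (a.1:ℕ)/2 + 1 ≤ k := by omega
          have hw1 : (k - (a.1:ℕ)/2) + (a.1:ℕ)/2 = k := by omega
          have hw2 : 1 ≤ k - (a.1:ℕ)/2 := by omega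
          have hw3 : k - (a.1:ℕ)/2 ≤ (k - (a.1:ℕ)/2)*Δ := by
            calc k - (a.1:ℕ)/2 = (k - (a.1:ℕ)/2)*1 := by ring
              _ ≤ (k - (a.1:ℕ)/2)*Δ := mul_le_mul_right hΔ _
          have hw4 : (k - (a.1:ℕ)/2)*Δ + ((a.1:ℕ)/2)*Δ = k*Δ := by
            rw [← add_mul, hw1]
          linarith
    rcases hr with h | h
    · exact main u v h
    · rw [Nat.dist_comm]; exact main v u h

private lemma upper (k Δ m n : ℕ) (hΔ : 1 ≤ Δ) (hm : m = k*Δ + k) (hn : n = 2*m + Δ + 1)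
    (c : Fin (2*k+1) × Fin (Δ+1) → ℕ)
    (hinj : Function.Injective c)
    (hmem : ∀ v, c v ∈ Finset.Icc 1 n)
    (hd : ∀ u v, (regularCaterpillar (2*k+1) Δ).Adj u v → m + 2 ≤ Nat.dist (c u) (c v)) :
    False := by
  classical
  have hadj_leg : ∀ (i : Fin (2*k+1)) (j : Fin (Δ+1)), j ≠ 0 →
      (regularCaterpillar (2*k+1) Δ).Adj (i, 0) (i, j) := by
    intro i j hj
    rw [regularCaterpillar, SimpleGraph.fromRel_adj]
    exact ⟨fun hh => hj ((congrArg Prod.snd hh).symm), Or.inl (Or.inr ⟨rfl, rfl, hj⟩)⟩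
  have legsfact : ∀ (i : Fin (2*k+1)) (j : Fin (Δ+1)), j ≠ 0 →
      c (i,0) + (m+2) ≤ c (i,j) ∨ c (i,j) + (m+2) ≤ c (i,0) := by
    intro i j hj
    have hdd := hd _ _ (hadj_leg i j hj)
    simp only [Nat.dist] at hdd
    omega
  have dich : ∀ i : Fin (2*k+1), c (i,0) ≤ m ∨ m+Δ+2 ≤ c (i,0) := by
    intro i
    by_contra hcon
    push_neg at hcon
    obtain ⟨h1, h2⟩ := hcon
    have hsub : ∀ j ∈ Finset.univ.erase (0 : Fin (Δ+1)),
        c (i, j) ∈ Finset.Icc 1 (c (i,0) - (m+2)) ∪ Finset.Icc (c (i,0) + (m+2)) n := by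
      intro j hjm
      have hj0 : j ≠ 0 := Finset.ne_of_mem_erase hjm
      have hval := legsfact i j hj0
      have hy := hmem (i,j)
      rw [Finset.mem_Icc] at hy
      rw [Finset.mem_union, Finset.mem_Icc, Finset.mem_Icc]
      omega
    have hinj2 : Set.InjOn (fun j => c (i, j))
        (Finset.univ.erase (0 : Fin (Δ+1))) := by
      intro a _ b _ hcc
      have := hinj hcc
      exact (Prod.ext_iff.mp this).2
    have hcard := Finset.card_le_card_of_injOn _ hsub hinj2
    rw [Finset.card_erase_of_mem (Finset.mem_univ _)] at hcard
    have hΔc : (Finset.univ : Finset (Fin (Δ+1))).card = Δ + 1 := by simp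
    rw [hΔc] at hcard
    have hcu := Finset.card_union_le (Finset.Icc 1 (c (i,0) - (m+2)))
      (Finset.Icc (c (i,0) + (m+2)) n)
    rw [Nat.card_Icc, Nat.card_Icc] at hcu
    have hx := hmem (i,0)
    rw [Finset.mem_Icc] at hx
    omega
  set LS := Finset.univ.filter (fun i : Fin (2*k+1) => c (i,0) ≤ m) with hLS
  set HS := Finset.univ.filter (fun i : Fin (2*k+1) => ¬ c (i,0) ≤ m) with hHS
  have hcount : LS.card + HS.card = 2*k+1 := by
    have := Finset.card_filter_add_card_filter_not
      (s := (Finset.univ : Finset (Fin (2*k+1))))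
      (p := fun i : Fin (2*k+1) => c (i,0) ≤ m)
    rw [hLS, hHS]
    simpa using this
  have hHSmem : ∀ i ∈ HS, m+Δ+2 ≤ c (i,0) := by
    intro i hi
    rw [hHS, Finset.mem_filter] at hi
    exact (dich i).resolve_left hi.2
  have hLSmem : ∀ i ∈ LS, c (i,0) ≤ m := by
    intro i hi
    rw [hLS, Finset.mem_filter] at hi
    exact hi.2
  have leg_of_high : ∀ i ∈ HS, ∀ j : Fin (Δ+1), j ≠ 0 → c (i,j) ≤ m+Δ-1 := by
    intro i hi j hj
    have h1 := hHSmem i hi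
    have h2 := legsfact i j hj
    have hy := hmem (i,j); rw [Finset.mem_Icc] at hy
    have hx := hmem (i,0); rw [Finset.mem_Icc] at hx
    omega
  have leg_of_low : ∀ i ∈ LS, ∀ j : Fin (Δ+1), j ≠ 0 → m+3 ≤ c (i,j) := by
    intro i hi j hj
    have h1 := hLSmem i hi
    have h2 := legsfact i j hj
    have hy := hmem (i,j); rw [Finset.mem_Icc] at hy
    have hx := hmem (i,0); rw [Finset.mem_Icc] at hx
    omega
  set legs := Finset.univ.erase (0 : Fin (Δ+1)) with hlegs
  have hlegscard : legs.card = Δ := by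
    rw [hlegs, Finset.card_erase_of_mem (Finset.mem_univ _)]
    simp
  have disj : ∀ (A B : Finset (Fin (2*k+1))),
      Disjoint (A ×ˢ legs) (B ×ˢ ({0} : Finset (Fin (Δ+1)))) := by
    intro A B
    rw [Finset.disjoint_left]
    rintro ⟨i, j⟩ hp hq
    rw [Finset.mem_product] at hp hq
    have h1 : j ≠ 0 := Finset.ne_of_mem_erase (hlegs ▸ hp.2)
    exact h1 (Finset.mem_singleton.mp hq.2)
  -- first counting set
  have count1 : (HS ×ˢ legs ∪ LS ×ˢ ({0} : Finset (Fin (Δ+1)))).card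
      = HS.card * Δ + LS.card := by
    rw [Finset.card_union_of_disjoint (disj HS LS), Finset.card_product,
      Finset.card_product, hlegscard, Finset.card_singleton, mul_one]
  have bound1 : HS.card * Δ + LS.card + 1 ≤ m + Δ := by
    have hss : ∀ p ∈ HS ×ˢ legs ∪ LS ×ˢ ({0} : Finset (Fin (Δ+1))),
        c p ∈ Finset.Icc 1 (m+Δ-1) := by
      rintro ⟨i, j⟩ hp
      rw [Finset.mem_union, Finset.mem_product, Finset.mem_product] at hp
      rw [Finset.mem_Icc]
      have hy := hmem (i,j); rw [Finset.mem_Icc] at hy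
      rcases hp with ⟨hiH, hjl⟩ | ⟨hiL, hj0⟩
      · have hj0 : j ≠ 0 := Finset.ne_of_mem_erase (hlegs ▸ hjl)
        exact ⟨hy.1, leg_of_high i hiH j hj0⟩
      · have hj0' : j = 0 := Finset.mem_singleton.mp hj0
        subst hj0'
        have := hLSmem i hiL
        exact ⟨hy.1, by omega⟩
    have hle := Finset.card_le_card_of_injOn c hss (fun a _ b _ hcc => hinj hcc)
    rw [count1, Nat.card_Icc] at hle
    omega
  -- second counting set
  have count2 : (LS ×ˢ legs ∪ HS ×ˢ ({0} : Finset (Fin (Δ+1)))).card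
      = LS.card * Δ + HS.card := by
    rw [Finset.card_union_of_disjoint (disj LS HS), Finset.card_product,
      Finset.card_product, hlegscard, Finset.card_singleton, mul_one]
  have bound2 : LS.card * Δ + HS.card + 1 ≤ m + Δ := by
    have hss : ∀ p ∈ LS ×ˢ legs ∪ HS ×ˢ ({0} : Finset (Fin (Δ+1))),
        c p ∈ Finset.Icc (m+3) n := by
      rintro ⟨i, j⟩ hp
      rw [Finset.mem_union, Finset.mem_product, Finset.mem_product] at hp
      rw [Finset.mem_Icc]
      have hy := hmem (i,j); rw [Finset.mem_Icc] at hy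
      rcases hp with ⟨hiL, hjl⟩ | ⟨hiH, hj0⟩
      · have hj0 : j ≠ 0 := Finset.ne_of_mem_erase (hlegs ▸ hjl)
        exact ⟨leg_of_low i hiL j hj0, hy.2⟩
      · have hj0' : j = 0 := Finset.mem_singleton.mp hj0
        subst hj0'
        have := hHSmem i hiH
        exact ⟨by omega, hy.2⟩
    have hle := Finset.card_le_card_of_injOn c hss (fun a _ b _ hcc => hinj hcc)
    rw [count2, Nat.card_Icc] at hle
    omega
  -- final contradiction
  have e0 : Δ - 1 + 1 = Δ := by omega
  rcases (by omega : k+1 ≤ HS.card ∨ k+1 ≤ LS.card) with hca | hca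
  · have hx : (k+1)*(Δ-1) ≤ HS.card*(Δ-1) := mul_le_mul_left hca _
    have e1 : HS.card*Δ = HS.card*(Δ-1) + HS.card := by
      calc HS.card*Δ = HS.card*(Δ-1+1) := by rw [e0]
        _ = HS.card*(Δ-1) + HS.card := by ring
    have e2 : (k+1)*Δ = (k+1)*(Δ-1) + (k+1) := by
      calc (k+1)*Δ = (k+1)*(Δ-1+1) := by rw [e0]
        _ = (k+1)*(Δ-1) + (k+1) := by ring
    have e3 : (k+1)*Δ = k*Δ + Δ := by ring
    linarith
  · have hx : (k+1)*(Δ-1) ≤ LS.card*(Δ-1) := mul_le_mul_left hca _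
    have e1 : LS.card*Δ = LS.card*(Δ-1) + LS.card := by
      calc LS.card*Δ = LS.card*(Δ-1+1) := by rw [e0]
        _ = LS.card*(Δ-1) + LS.card := by ring
    have e2 : (k+1)*Δ = (k+1)*(Δ-1) + (k+1) := by
      calc (k+1)*Δ = (k+1)*(Δ-1+1) := by rw [e0]
        _ = (k+1)*(Δ-1) + (k+1) := by ring
    have e3 : (k+1)*Δ = k*Δ + Δ := by ring
    linarith

/-- A regular caterpillar with an odd number `s = 2k+1` of spine vertices and
`Δ ≥ 1` legs per spine vertex (`n = (2k+1)(Δ+1)`) admits a labeling of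
differential value at least `⌈(n − Δ)/2⌉`, and its differential chromatic number
equals `⌈(n − Δ)/2⌉`. -/
theorem stmt_7 (k Δ : ℕ) (hΔ : 1 ≤ Δ) :
    (∃ c : Fin (2 * k + 1) × Fin (Δ + 1) → ℕ, IsLabeling c ∧
      DiffValAtLeast (regularCaterpillar (2 * k + 1) Δ) c
        (((2 * k + 1) * (Δ + 1) - Δ + 1) / 2)) ∧
    diffChromNum (regularCaterpillar (2 * k + 1) Δ) =
      ((2 * k + 1) * (Δ + 1) - Δ + 1) / 2 := by
  have hval : ((2*k+1)*(Δ+1) - Δ + 1) / 2 = k*(Δ+1) + 1 := by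
    obtain ⟨a, ha⟩ : ∃ a, k*(Δ+1) = a := ⟨_, rfl⟩
    have hb : (2*k+1)*(Δ+1) = 2*a + Δ + 1 := by rw [← ha]; ring
    rw [ha, hb]
    omega
  obtain ⟨c, hc, hdv⟩ := lower k Δ hΔ
  have hcard : Fintype.card (Fin (2*k+1) × Fin (Δ+1)) = (2*k+1)*(Δ+1) := by simp
  have hupper : ∀ b ∈ {d : ℕ | ∃ c' : Fin (2*k+1) × Fin (Δ+1) → ℕ,
      IsLabeling c' ∧ DiffValAtLeast (regularCaterpillar (2*k+1) Δ) c' d},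
      b ≤ k*(Δ+1)+1 := by
    rintro b ⟨c', ⟨hinj, hmem⟩, hb⟩
    by_contra hgt
    push_neg at hgt
    refine upper k Δ (k*Δ+k) ((2*k+1)*(Δ+1)) hΔ rfl (by ring) c' hinj ?_ ?_
    · intro v
      have := hmem v
      rwa [hcard] at this
    · intro u v huv
      refine le_trans ?_ (hb u v huv)
      calc k*Δ+k+2 = k*(Δ+1)+1+1 := by ring
        _ ≤ b := hgt
  constructor
  · exact ⟨c, hc, by rw [hval]; exact hdv⟩
  · rw [hval]
    exact IsGreatest.csSup_eq ⟨⟨c, hc, hdv⟩, hupper⟩
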